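/- Let H be an n×n complex Hermitian matrix with eigenvalues λ_1 ≤ ... ≤ λ_n and orthonormal eigenvectors v_1,...,v_n, let u_0 ∈ ℂ^n, t ≥ 0, and let w(t,p) = Σ_{k=1}^n e^{-|p-λ_k t|} ⟨v_k, u_0⟩ v_k. Then for every real p with p > max(λ_n t, 0), one has e^p · w(t,p) = exp(tH) u_0. -/

import Mathlib

open scoped BigOperators ComplexConjugate Matrix

/-- Recovery of `exp(tH) u₀` from the Schrödingerised solution
`w(t,p) = ∑ₖ e^{-|p-λₖt|} ⟨vₖ,u₀⟩ vₖ` by pointwise evaluation at any `p > max(λₙ t, 0)`. -/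
theorem schrodingerisation_pointwise_recovery
    (n : ℕ) (H : Matrix (Fin (n + 1)) (Fin (n + 1)) ℂ) (hH : H.IsHermitian)
    (lam : Fin (n + 1) → ℝ) (hmono : Monotone lam)
    (v : Fin (n + 1) → (Fin (n + 1) → ℂ))
    (hortho : ∀ j k, (∑ i, conj (v j i) * v k i) = if j = k then 1 else 0)
    (heig : ∀ k, H.mulVec (v k) = (lam k : ℂ) • v k)
    (u0 : Fin (n + 1) → ℂ) (t : ℝ) (ht : 0 ≤ t)
    (w : ℝ → ℝ → (Fin (n + 1) → ℂ))
    (hw : ∀ τ p, w τ p =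
      ∑ k, (Real.exp (-|p - lam k * τ|) : ℂ) • (∑ i, conj (v k i) * u0 i) • v k)
    (p : ℝ) (hp : p > max (lam (Fin.last n) * t) 0) :
    (Real.exp p : ℂ) • w t p = (NormedSpace.exp ((t : ℂ) • H)).mulVec u0 := by
  classical
  set M : Matrix (Fin (n + 1)) (Fin (n + 1)) ℂ := Matrix.of (fun i k => v k i) with hM
  have h1 : Mᴴ * M = 1 := by
    ext j k
    simpa [Matrix.mul_apply, Matrix.conjTranspose_apply, hM, Matrix.one_apply] using hortho j k
  have h2 : M * Mᴴ = 1 := mul_eq_one_comm.mp h1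
  have hU : IsUnit M := ⟨⟨M, Mᴴ, h2, h1⟩, rfl⟩
  have hinv : M⁻¹ = Mᴴ := Matrix.inv_eq_right_inv h2
  have hHM : H * M = M * Matrix.diagonal (fun k => (lam k : ℂ)) := by
    ext i k
    have h := congrFun (heig k) i
    simp only [Matrix.mulVec, dotProduct, Pi.smul_apply, smul_eq_mul] at h
    simp only [Matrix.mul_apply, hM, Matrix.of_apply, h, Matrix.diagonal_apply, mul_ite, mul_zero,
      Finset.sum_ite_eq, Finset.sum_ite_eq', Finset.mem_univ, if_true]
    ring
  have hHdec : (t : ℂ) • H = M * Matrix.diagonal (fun k => (t : ℂ) * lam k) * Mᴴ := by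
    have : H = M * Matrix.diagonal (fun k => (lam k : ℂ)) * Mᴴ := by
      calc H = H * (M * Mᴴ) := by rw [h2, mul_one]
        _ = (H * M) * Mᴴ := by rw [mul_assoc]
        _ = M * Matrix.diagonal (fun k => (lam k : ℂ)) * Mᴴ := by rw [hHM]
    rw [this, ← Matrix.smul_mul, ← Matrix.mul_smul, ← Matrix.diagonal_smul]
    congr 2
  have hexp : NormedSpace.exp ((t : ℂ) • H)
      = M * Matrix.diagonal (fun k => Complex.exp ((t : ℂ) * lam k)) * Mᴴ := by
    rw [hHdec, ← hinv, Matrix.exp_conj M _ hU, Matrix.exp_diagonal, hinv, Pi.exp_def]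
    simp [← Complex.exp_eq_exp_ℂ]
  -- pointwise computation
  funext i
  have habs : ∀ k, |p - lam k * t| = p - lam k * t := by
    intro k
    have h1 : lam k * t ≤ lam (Fin.last n) * t :=
      mul_le_mul_of_nonneg_right (hmono (Fin.le_last k)) ht
    have : lam k * t < p := lt_of_le_of_lt h1 (lt_of_le_of_lt (le_max_left _ _) hp)
    rw [abs_of_nonneg (by linarith)]
  rw [hw, hexp]
  simp only [Pi.smul_apply, Finset.sum_apply, smul_eq_mul, Matrix.mulVec, dotProduct,
    Matrix.mul_apply, Matrix.mul_diagonal, Matrix.conjTranspose_apply, hM, Matrix.of_apply]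
  rw [Finset.mul_sum]
  simp only [Matrix.diagonal_apply, mul_ite, ite_mul, mul_zero, zero_mul,
    Finset.sum_ite_eq, Finset.sum_ite_eq', Finset.mem_univ, if_true, Finset.sum_mul]
  rw [Finset.sum_comm]
  refine Finset.sum_congr rfl fun k _ => ?_
  have hscal : (Real.exp p : ℂ) * (Real.exp (-|p - lam k * t|) : ℂ)
      = Complex.exp ((t : ℂ) * lam k) := by
    rw [habs k, ← Complex.ofReal_mul, ← Real.exp_add, Complex.ofReal_exp]
    congr 1
    push_cast
    ring
  rw [Finset.mul_sum, Finset.mul_sum]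
  refine Finset.sum_congr rfl fun x _ => ?_
  simp only [starRingEnd_apply]
  rw [← hscal]
  ring
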